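/- Let H be a real symmetric 3×3 matrix with entries H_{αβ} (α, β ∈ {0,1,2}) satisfying H_{00} = −1, and let ξ = (ξ₀, ξ₁, ξ₂) ∈ ℝ³. Let A(ξ) be the 4×4 real matrix A(ξ) = [[ξ₀ − 2H_{01}ξ₁ − 2H_{02}ξ₂, −H_{11}ξ₁ − H_{21}ξ₂, −H_{12}ξ₁ − H_{22}ξ₂, 0], [−ξ₁, ξ₀, 0, 0], [−ξ₂, 0, ξ₀, 0], [0, 0, 0, ξ₀]]. If ξ₀ ≠ 0 and Σ_{α,β∈{0,1,2}} H_{αβ} ξ_α ξ_β < 0 (i.e., ξ is H-timelike), then A(ξ) is invertible. -/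

import Mathlib

open Matrix BigOperators

/-- For a real symmetric 3×3 matrix `H` with `H 0 0 = -1` and `ξ ∈ ℝ³` with
`ξ₀ ≠ 0` that is `H`-timelike (i.e. `Σ H_{αβ} ξ_α ξ_β < 0`), the principal-symbol matrix
`A(ξ)` is invertible. -/
theorem principal_symbol_invertible
    (H : Matrix (Fin 3) (Fin 3) ℝ) (hH : H.IsSymm) (h00 : H 0 0 = -1)
    (ξ : Fin 3 → ℝ) (hξ0 : ξ 0 ≠ 0)
    (htimelike : ∑ α : Fin 3, ∑ β : Fin 3, H α β * ξ α * ξ β < 0) :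
    IsUnit (!![ξ 0 - 2 * H 0 1 * ξ 1 - 2 * H 0 2 * ξ 2,
        -(H 1 1 * ξ 1) - H 2 1 * ξ 2,
        -(H 1 2 * ξ 1) - H 2 2 * ξ 2,
        0;
        -ξ 1, ξ 0, 0, 0;
        -ξ 2, 0, ξ 0, 0;
        0, 0, 0, ξ 0] : Matrix (Fin 4) (Fin 4) ℝ) := by
  have h10 : H 1 0 = H 0 1 := by rw [← hH.apply]
  have h20 : H 2 0 = H 0 2 := by rw [← hH.apply]
  have h21 : H 2 1 = H 1 2 := by rw [← hH.apply]
  rw [h21]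
  rw [Matrix.isUnit_iff_isUnit_det, isUnit_iff_ne_zero]
  simp only [Fin.sum_univ_three] at htimelike
  rw [h00, h10, h20, h21] at htimelike
  simp [Matrix.det_succ_row_zero, Fin.sum_univ_succ, Fin.succAbove]
  ring_nf
  nlinarith [sq_nonneg (ξ 0), sq_pos_of_ne_zero hξ0, mul_pos (sq_pos_of_ne_zero hξ0) (neg_pos.2 htimelike)]
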